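/- Let n ≥ 4 be a positive integer, c ∈ 𝔽_{2^n} with c ≠ 0 and c ≠ 1, and F: 𝔽_{2^n} → 𝔽_{2^n} the inverse function F(x) = x^{2^n − 2}. Then for all a, b ∈ 𝔽_{2^n}, the c-BCT entry _cB_F(a, b) ≤ 3; in particular the c-boomerang uniformity β_{F,c} ≤ 3. -/

import Mathlib

/-! Auxiliary lemmas for STATEMENT 15: the `c`-boomerang uniformity of the inverse
function on `𝔽_{2^n}` is at most 3. -/

section Aux

variable {K : Type*} [Field K]

/-- A set of solutions of a genuine quadratic has at most 2 elements. -/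
private lemma quad_ncard_le_two (α β γ : K) (hα : α ≠ 0) :
    ({x : K | α * x^2 + β * x + γ = 0}).ncard ≤ 2 := by
  by_contra h
  push_neg at h
  obtain ⟨t, hts, ht3⟩ := Set.exists_subset_card_eq
    (show 3 ≤ ({x : K | α * x^2 + β * x + γ = 0}).ncard from h)
  rw [Set.ncard_eq_three] at ht3
  obtain ⟨x, y, z, hxy, hxz, hyz, rfl⟩ := ht3
  have hx : α * x^2 + β * x + γ = 0 := hts (by simp)
  have hy : α * y^2 + β * y + γ = 0 := hts (by simp)
  have hz : α * z^2 + β * z + γ = 0 := hts (by simp)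
  have h1 : (x - y) * (α * (x + y) + β) = 0 := by linear_combination hx - hy
  have h2 : (x - z) * (α * (x + z) + β) = 0 := by linear_combination hx - hz
  have h1' : α * (x + y) + β = 0 := by
    rcases mul_eq_zero.1 h1 with h | h
    · exact absurd (by linear_combination h) hxy
    · exact h
  have h2' : α * (x + z) + β = 0 := by
    rcases mul_eq_zero.1 h2 with h | h
    · exact absurd (by linear_combination h) hxz
    · exact h
  have h3 : α * (y - z) = 0 := by linear_combination h1' - h2'
  rcases mul_eq_zero.1 h3 with h | h
  · exact hα h
  · exact hyz (by linear_combination h)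

omit [Field K] in
private lemma subsingleton_ncard_le_one {s : Set K} (h : s.Subsingleton) : s.ncard ≤ 1 := by
  rcases h.eq_empty_or_singleton with rfl | ⟨x, rfl⟩ <;> simp

private lemma card_le_ncard [Finite K] (Q : K → Prop) (s : Set K) (h : ∀ x, Q x → x ∈ s) :
    Nat.card {x : K // Q x} ≤ s.ncard := by
  have : Nat.card {x : K // Q x} = Set.ncard {x | Q x} := rfl
  rw [this]
  exact Set.ncard_le_ncard h s.toFinite


section
variable {t c : K}

lemma cp1 (htwo : (2 : K) = 0) (hc1 : c ≠ 1) (h : c + 1 = 0) : False := hc1 (by linear_combination h - htwo)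

lemma excl_aux (htwo : (2 : K) = 0) (ht : t ≠ 0) (hc1 : c ≠ 1) (hT : t^2 + t + 1 = 0) (h0 : 1 + t - t^2*c = 0) : False := by
  have h : (c - 1) * t^2 = 0 := by linear_combination -h0 - hT + (t+1)*htwo
  rcases mul_eq_zero.1 h with h | h
  · exact hc1 (by linear_combination h)
  · exact ht (pow_eq_zero_iff (two_ne_zero) |>.1 h)

lemma excl01 (htwo : (2 : K) = 0) (ht : t ≠ 0) (hc1 : c ≠ 1) (h0 : 1 + t - t^2*c = 0) (h1 : c^2 + t*c + t - t*c^2 - t^2*c = 0) : False := by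
  have hT : t^2 + t + 1 = 0 := by
    linear_combination (1 + t^2 + t^2*c + t^3 + t^3*c + t^4)*h0 + t^4*h1
      + (-(t^3) - t^3*c - t^4 - t^5 + t^5*c^2 + t^6*c)*htwo
  exact excl_aux htwo ht hc1 hT h0

lemma excl02 (htwo : (2 : K) = 0) (ht : t ≠ 0) (hc1 : c ≠ 1) (h0 : 1 + t - t^2*c = 0) (h2 : t^2 + t*c - c = 0) : False := by
  have hT2 : (t^2 + t + 1)^2 = 0 := by
    linear_combination (1+t)*h0 + t^2*h2 + (t^2 + t^2*c + t^3)*htwo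
  exact excl_aux htwo ht hc1 (pow_eq_zero_iff two_ne_zero |>.1 hT2) h0

lemma excl03 (htwo : (2 : K) = 0) (ht : t ≠ 0) (hc0 : c ≠ 0) (hc1 : c ≠ 1) (h0 : 1 + t - t^2*c = 0) (h3 : t*c^2 + t^2*c + t*c - t - 1 = 0) : False := by
  have h : t*c*(c+1) = 0 := by linear_combination h0 + h3
  rcases mul_eq_zero.1 h with h | h
  · rcases mul_eq_zero.1 h with h | h
    · exact ht h
    · exact hc0 h
  · exact cp1 htwo hc1 h

lemma excl12 (htwo : (2 : K) = 0) (hc0 : c ≠ 0) (hc1 : c ≠ 1) (h1 : c^2 + t*c + t - t*c^2 - t^2*c = 0) (h2 : t^2 + t*c - c = 0) : False := by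
  have h : (1+t)*((c+1)*(c+t)) = 0 := by
    linear_combination h1 + h2 + (c + t*c^2 + t^2*c)*htwo
  rcases mul_eq_zero.1 h with h | h
  · have hplus : t + 1 = 0 := by linear_combination h
    have : (1:K) = 0 := by linear_combination h2 - (t-1)*hplus - c*hplus + c*htwo
    exact one_ne_zero this
  · rcases mul_eq_zero.1 h with h | h
    · exact cp1 htwo hc1 h
    · exact hc0 (by linear_combination t*h - h2)

lemma excl13 (htwo : (2 : K) = 0) (hc1 : c ≠ 1) (h1 : c^2 + t*c + t - t*c^2 - t^2*c = 0) (h3 : t*c^2 + t^2*c + t*c - t - 1 = 0) : False := by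
  have h : (c-1)*(c+1) = 0 := by linear_combination h1 + h3 - (t*c)*htwo
  rcases mul_eq_zero.1 h with h | h
  · exact hc1 (by linear_combination h)
  · exact cp1 htwo hc1 h

lemma excl23 (htwo : (2 : K) = 0) (hc1 : c ≠ 1) (h2 : t^2 + t*c - c = 0) (h3 : t*c^2 + t^2*c + t*c - t - 1 = 0) : False := by
  have h : (c+1)*(c+t+1) = 0 := by
    linear_combination h3 + c*h2 + (c^2 + c + t + 1 - t*c^2 - t^2*c)*htwo
  rcases mul_eq_zero.1 h with h | h
  · exact cp1 htwo hc1 h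
  · have : (1:K) = 0 := by linear_combination h2 - t*h + h
    exact one_ne_zero this

end

private lemma inv_classify [Finite K] (htwo : (2 : K) = 0) (c : K) (hc0 : c ≠ 0) (hc1 : c ≠ 1)
    (a b : K) (ha : a ≠ 0) (hb : b ≠ 0) (x : K)
    (hx : ((b - c * x⁻¹)⁻¹ + a)⁻¹ + c⁻¹ * (x + a)⁻¹ = b) :
    (a*b^2*c * x^2 + -(1 + a*b - c^2 - a^2*b^2*c + a*b*c^2) * x + (a*c + a*c^2 - a^2*b*c^2) = 0)
    ∨ ((x = 0 ∧ 1 + a*b - (a*b)^2*c = 0)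
      ∨ (x = c*b⁻¹ ∧ c^2 + (a*b)*c + a*b - (a*b)*c^2 - (a*b)^2*c = 0)
      ∨ (x = -a ∧ (a*b)^2 + (a*b)*c - c = 0)
      ∨ (x = (b*c)⁻¹ - a ∧ (a*b)*c^2 + (a*b)^2*c + (a*b)*c - a*b - 1 = 0)) := by
  have hcc : c * c⁻¹ = 1 := mul_inv_cancel₀ hc0
  have haa : a * a⁻¹ = 1 := mul_inv_cancel₀ ha
  have hbb : b * b⁻¹ = 1 := mul_inv_cancel₀ hb
  by_cases hx0 : x = 0
  · -- x = 0 branch : C0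
    right; left
    subst hx0
    refine ⟨rfl, ?_⟩
    rw [inv_zero, mul_zero, sub_zero, zero_add] at hx
    by_cases hba : b⁻¹ + a = 0
    · exfalso
      rw [hba, inv_zero, zero_add] at hx
      have ha2 : a⁻¹ = -b := by
        rw [show a = -b⁻¹ from by linear_combination hba, inv_neg, inv_inv]
      rw [ha2] at hx
      have h3 : (c⁻¹ + 1) * b = 0 := by linear_combination -hx
      rcases mul_eq_zero.1 h3 with h | h
      · apply hc1
        have h4 : c * c⁻¹ + c = 0 := by linear_combination c * h
        linear_combination -h4 + hcc + c*htwo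
      · exact absurd h hb
    · have h1 : (b⁻¹ + a) * (b - c⁻¹ * a⁻¹) = 1 := by
        rw [show b - c⁻¹*a⁻¹ = (b⁻¹ + a)⁻¹ from by linear_combination -hx]
        exact mul_inv_cancel₀ hba
      field_simp at h1
      linear_combination h1 + (1 + a*b - a^2*b^2*c)*htwo
  by_cases hd : b - c * x⁻¹ = 0
  · -- y = 0 branch : C1
    right; right; left
    have hxx : x * x⁻¹ = 1 := mul_inv_cancel₀ hx0
    have hxv : x = c * b⁻¹ := by
      have h1 : x⁻¹ = c⁻¹ * b := by linear_combination -c⁻¹ * hd - x⁻¹ * hcc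
      rw [← inv_inv x, h1, mul_inv, inv_inv]
    refine ⟨hxv, ?_⟩
    rw [hd, inv_zero, zero_add] at hx
    rw [hxv] at hx
    by_cases hu : c * b⁻¹ + a = 0
    · exfalso
      rw [hu, inv_zero, mul_zero, add_zero] at hx
      have ha2 : a = b⁻¹ := by rw [← inv_inv a, hx]
      have h2 : (c + 1) * b⁻¹ = 0 := by linear_combination hu - ha2
      rcases mul_eq_zero.1 h2 with h | h
      · exact hc1 (by linear_combination h - htwo)
      · exact hb (inv_eq_zero.1 h)
    · have h1 : (c*b⁻¹ + a) * (c*(b - a⁻¹)) = 1 := by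
        rw [show c*(b - a⁻¹) = (c*b⁻¹+a)⁻¹ from by linear_combination -c*hx + (c*b⁻¹+a)⁻¹*hcc]
        exact mul_inv_cancel₀ hu
      field_simp at h1
      linear_combination h1 + (c*a*b - c*a^2*b^2 + c^2 - c^2*a*b + a*b)*htwo
  by_cases hxa : x + a = 0
  · -- x = -a branch : C2
    right; right; right; left
    have hxv : x = -a := by linear_combination hxa
    refine ⟨hxv, ?_⟩
    rw [hxa, inv_zero, mul_zero, add_zero] at hx
    subst hxv
    have e : b - c * (-a)⁻¹ = (a*b + c) * a⁻¹ := by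
      rw [inv_neg]; linear_combination -b*haa
    have habc : a*b + c ≠ 0 := by
      intro h
      exact hd (by rw [e, h, zero_mul])
    rw [e, mul_inv, inv_inv] at hx
    have h2 : (a*b+c)⁻¹ * a + a = b⁻¹ := by rw [← inv_inv ((a*b+c)⁻¹ * a + a), hx]
    field_simp at h2
    linear_combination h2
  by_cases hya : (b - c * x⁻¹)⁻¹ + a = 0
  · -- y = -a branch : C3
    right; right; right; right
    rw [hya, inv_zero, zero_add] at hx
    have h4 : (x+a)⁻¹ = c*b := by linear_combination c*hx - (x+a)⁻¹*hcc
    have h5 : x + a = (c*b)⁻¹ := by rw [← inv_inv (x+a), h4]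
    have hxv : x = (b*c)⁻¹ - a := by
      rw [show (b*c)⁻¹ = (c*b)⁻¹ by rw [mul_comm]]
      linear_combination h5
    refine ⟨hxv, ?_⟩
    have h6 : b - c*x⁻¹ = -a⁻¹ := by
      rw [← inv_inv (b - c*x⁻¹), show (b - c*x⁻¹)⁻¹ = -a from by linear_combination hya, inv_neg]
    have hxx : x * x⁻¹ = 1 := mul_inv_cancel₀ hx0
    have h7 : a*c = (a*b + 1)*x := by linear_combination -a*x*h6 - a*c*hxx + x*haa
    rw [hxv] at h7
    have hbc : (b*c)*(b*c)⁻¹ = 1 := mul_inv_cancel₀ (mul_ne_zero hb hc0)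
    linear_combination b*c*h7 + (a*b+1)*hbc
  · -- generic branch: quadratic
    left
    have hxx : x * x⁻¹ = 1 := mul_inv_cancel₀ hx0
    have hd2 : b*x - c ≠ 0 := by
      intro h
      apply hd
      have h5 : (b - c*x⁻¹)*x = 0 := by linear_combination h - c*hxx
      rcases mul_eq_zero.1 h5 with h6 | h6
      · exact h6
      · exact absurd h6 hx0
    have hdd : (b*x - c) * (b*x - c)⁻¹ = 1 := mul_inv_cancel₀ hd2
    have e2a : b - c*x⁻¹ = (b*x - c) * x⁻¹ := by linear_combination -b*hxx
    rw [e2a, mul_inv, inv_inv] at hx hya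
    have hya2 : x + a*(b*x - c) ≠ 0 := by
      intro h
      apply hya
      have h5 : ((b*x - c)⁻¹ * x + a) * (b*x - c) = x + a*(b*x-c) := by
        linear_combination x * hdd
      rw [h] at h5
      rcases mul_eq_zero.1 h5 with h6 | h6
      · exact h6
      · exact absurd h6 hd2
    have e3a : (b*x-c)⁻¹ * x + a = (x + a*(b*x-c)) * (b*x-c)⁻¹ := by linear_combination -a*hdd
    rw [e3a, mul_inv, inv_inv] at hx
    field_simp at hx
    rw [div_add_one (by rwa [mul_comm x b]), div_eq_iff (by rwa [mul_comm x b])] at hx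
    linear_combination hx + (a*b^2*c*x^2 - a*b*c^2*x - a*b*x + a^2*b^2*c*x + c^2*x - x + a*c
      + a*c^2 - a^2*b*c^2)*htwo

private lemma card_T_le_three [Finite K] (htwo : (2 : K) = 0) (c : K) (hc0 : c ≠ 0)
    (hc1 : c ≠ 1) (a b : K) :
    Nat.card {x : K // ((b - c * x⁻¹)⁻¹ + a)⁻¹ + c⁻¹ * (x + a)⁻¹ = b} ≤ 3 := by
  have hcc : c * c⁻¹ = 1 := mul_inv_cancel₀ hc0
  have hcsq : c * c - 1 ≠ 0 := by
    intro h
    apply hc1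
    have h2 : (c - 1) * (c - 1) = 0 := by linear_combination h + (1 - c) * htwo
    have := mul_self_eq_zero.1 h2
    linear_combination this
  by_cases ha : a = 0
  · subst ha
    refine le_trans (card_le_ncard _ {0} ?_) (by simp)
    intro x hx
    simp only [add_zero, inv_inv] at hx
    have h : (c⁻¹ - c) * x⁻¹ = 0 := by linear_combination hx
    rcases mul_eq_zero.1 h with h | h
    · exfalso
      apply hcsq
      linear_combination -c * h + hcc
    · simpa using inv_eq_zero.1 h
  by_cases hb : b = 0
  · subst hb
    refine le_trans (card_le_ncard _ {(c*c - 1)⁻¹ * (-(a*c + a*c*c))} ?_) (by simp)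
    intro x hx
    simp only [Set.mem_singleton_iff]
    have e1 : ((0:K) - c * x⁻¹)⁻¹ = -(c⁻¹ * x) := by
      rw [zero_sub, inv_neg, mul_inv, inv_inv]
    rw [e1] at hx
    have h2 : (-(c⁻¹ * x) + a)⁻¹ = (-(c * (x + a)))⁻¹ := by
      rw [inv_neg, mul_inv]
      linear_combination hx
    have h3 := inv_injective h2
    have h4 : (c * c - 1) * x = -(a*c + a*c*c) := by
      linear_combination c * h3 + x * hcc
    rw [← h4, ← mul_assoc, inv_mul_cancel₀ hcsq, one_mul]
  have hcc : c * c⁻¹ = 1 := mul_inv_cancel₀ hc0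
  have hcsq : c * c - 1 ≠ 0 := by
    intro h
    apply hc1
    have h2 : (c - 1) * (c - 1) = 0 := by linear_combination h + (1 - c) * htwo
    have := mul_self_eq_zero.1 h2
    linear_combination this
  by_cases ha : a = 0
  · subst ha
    refine le_trans (card_le_ncard _ {0} ?_) (by simp)
    intro x hx
    simp only [add_zero, inv_inv] at hx
    have h : (c⁻¹ - c) * x⁻¹ = 0 := by linear_combination hx
    rcases mul_eq_zero.1 h with h | h
    · exfalso
      apply hcsq
      linear_combination -c * h + hcc
    · simpa using inv_eq_zero.1 h
  by_cases hb : b = 0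
  · subst hb
    refine le_trans (card_le_ncard _ {(c*c - 1)⁻¹ * (-(a*c + a*c*c))} ?_) (by simp)
    intro x hx
    simp only [Set.mem_singleton_iff]
    have e1 : ((0:K) - c * x⁻¹)⁻¹ = -(c⁻¹ * x) := by
      rw [zero_sub, inv_neg, mul_inv, inv_inv]
    rw [e1] at hx
    have h2 : (-(c⁻¹ * x) + a)⁻¹ = (-(c * (x + a)))⁻¹ := by
      rw [inv_neg, mul_inv]
      linear_combination hx
    have h3 := inv_injective h2
    have h4 : (c * c - 1) * x = -(a*c + a*c*c) := by
      linear_combination c * h3 + x * hcc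
    rw [← h4, ← mul_assoc, inv_mul_cancel₀ hcsq, one_mul]
  · -- main case : a ≠ 0, b ≠ 0
    have ht : a*b ≠ 0 := mul_ne_zero ha hb
    set B : Set K := {x : K | (x = 0 ∧ 1 + a*b - (a*b)^2*c = 0)
      ∨ (x = c*b⁻¹ ∧ c^2 + (a*b)*c + a*b - (a*b)*c^2 - (a*b)^2*c = 0)
      ∨ (x = -a ∧ (a*b)^2 + (a*b)*c - c = 0)
      ∨ (x = (b*c)⁻¹ - a ∧ (a*b)*c^2 + (a*b)^2*c + (a*b)*c - a*b - 1 = 0)} with hB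
    set A : Set K := {x : K |
      a*b^2*c * x^2 + -(1 + a*b - c^2 - a^2*b^2*c + a*b*c^2) * x
        + (a*c + a*c^2 - a^2*b*c^2) = 0} with hA
    refine le_trans (card_le_ncard _ (A ∪ B) ?_) ?_
    · intro x hx
      exact inv_classify htwo c hc0 hc1 a b ha hb x hx
    · have h1 : A.ncard ≤ 2 :=
        quad_ncard_le_two _ _ _ (mul_ne_zero (mul_ne_zero ha (pow_ne_zero 2 hb)) hc0)
      have h2 : B.ncard ≤ 1 := by
        apply subsingleton_ncard_le_one
        rintro x hx y hy
        rcases hx with ⟨hx1, h0⟩|⟨hx1, h1⟩|⟨hx1, h2⟩|⟨hx1, h3⟩ <;>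
          rcases hy with ⟨hy1, k0⟩|⟨hy1, k1⟩|⟨hy1, k2⟩|⟨hy1, k3⟩ <;>
          first
          | exact (excl01 htwo ht hc1 h0 k1).elim
          | exact (excl01 htwo ht hc1 k0 h1).elim
          | exact (excl02 htwo ht hc1 h0 k2).elim
          | exact (excl02 htwo ht hc1 k0 h2).elim
          | exact (excl03 htwo ht hc0 hc1 h0 k3).elim
          | exact (excl03 htwo ht hc0 hc1 k0 h3).elim
          | exact (excl12 htwo hc0 hc1 h1 k2).elim
          | exact (excl12 htwo hc0 hc1 k1 h2).elim
          | exact (excl13 htwo hc1 h1 k3).elim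
          | exact (excl13 htwo hc1 k1 h3).elim
          | exact (excl23 htwo hc1 h2 k3).elim
          | exact (excl23 htwo hc1 k2 h3).elim
          | rw [hx1, hy1]
      calc (A ∪ B).ncard ≤ A.ncard + B.ncard := Set.ncard_union_le _ _
        _ ≤ 3 := by omega

end Aux

/-- for the inverse function `F(x) = x^{2^n−2}` on `𝔽_{2^n}` (`n ≥ 4`)
and `c ≠ 0,1`, every `c`-BCT entry is at most `3`; in particular `β_{F,c} ≤ 3`. -/
theorem inverse_cBCT_le_three (n : ℕ) (hn : 4 ≤ n)
    (c : GaloisField 2 n) (hc0 : c ≠ 0) (hc1 : c ≠ 1) (a b : GaloisField 2 n) :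
    Nat.card {xg : GaloisField 2 n × GaloisField 2 n //
      (xg.1 + xg.2) ^ (2 ^ n - 2) + c * xg.1 ^ (2 ^ n - 2) = b ∧
      (xg.1 + xg.2 + a) ^ (2 ^ n - 2) + c⁻¹ * (xg.1 + a) ^ (2 ^ n - 2) = b} ≤ 3 := by
  have hp : Fact (Nat.Prime 2) := ⟨Nat.prime_two⟩
  let K := GaloisField 2 n
  have htwo : (2 : GaloisField 2 n) = 0 := by
    have := CharP.cast_eq_zero K 2
    simpa using this
  have hn0 : n ≠ 0 := by omega
  have hcard : Nat.card (GaloisField 2 n) = 2 ^ n := GaloisField.card 2 n hn0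
  have hpow : ∀ x : GaloisField 2 n, x ^ (2 ^ n - 2) = x⁻¹ := by
    intro x
    rcases eq_or_ne x 0 with rfl | hx
    · rw [inv_zero, zero_pow]
      have : 16 ≤ 2 ^ n := by calc (16:ℕ) = 2^4 := by norm_num
                                   _ ≤ 2 ^ n := Nat.pow_le_pow_right (by norm_num) hn
      omega
    · have hfin : Fintype (GaloisField 2 n) := Fintype.ofFinite _
      have hc : Fintype.card (GaloisField 2 n) = 2 ^ n := by rw [← Nat.card_eq_fintype_card]; exact hcard
      have h1 : x ^ (Fintype.card (GaloisField 2 n) - 1) = 1 := FiniteField.pow_card_sub_one_eq_one x hx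
      have h2 : x ^ (2 ^ n - 2) * x = x ^ (2 ^ n - 1) := by
        rw [← pow_succ]
        congr 1
        have : 16 ≤ 2 ^ n := by calc (16:ℕ) = 2^4 := by norm_num
                                     _ ≤ 2 ^ n := Nat.pow_le_pow_right (by norm_num) hn
        omega
      rw [hc] at h1
      field_simp
      rw [h2, h1]
  -- rewrite powers as inverses and inject into the one-variable solution set
  refine le_trans (Nat.card_le_card_of_injective
    (fun p => (⟨p.1.1, ?_⟩ : {x : GaloisField 2 n // ((b - c * x⁻¹)⁻¹ + a)⁻¹ + c⁻¹ * (x + a)⁻¹ = b})) ?_)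
    (card_T_le_three htwo c hc0 hc1 a b)
  · obtain ⟨⟨x, g⟩, h1, h2⟩ := p
    simp only [hpow] at h1 h2
    have hy : x + g = (b - c * x⁻¹)⁻¹ := by
      rw [← inv_inv (x + g)]
      congr 1
      linear_combination h1
    dsimp only
    rw [← hy]
    exact h2
  · rintro ⟨⟨x1, g1⟩, h1, h2⟩ ⟨⟨x2, g2⟩, h3, h4⟩ he
    simp only [Subtype.mk.injEq] at he ⊢
    simp only [hpow] at h1 h3
    subst he
    have hy1 : x1 + g1 = (b - c * x1⁻¹)⁻¹ := by
      rw [← inv_inv (x1 + g1)]; congr 1; linear_combination h1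
    have hy2 : x1 + g2 = (b - c * x1⁻¹)⁻¹ := by
      rw [← inv_inv (x1 + g2)]; congr 1; linear_combination h3
    have := hy1.trans hy2.symm
    have hg : g1 = g2 := by linear_combination this
    rw [hg]
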